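/- Let G be a simple graph on n vertices with a partition (V_1, …, V_k) of its vertex set, and let H be the graph obtained from G as follows: add all edges inside each V_i (turning each V_i into a clique); for each i, add two new vertices x_i and y_i, each adjacent exactly to all vertices of V_i; and add a new vertex z adjacent exactly to all vertices of V(G). If I is an independent set of G containing exactly one vertex from each V_i, then the set I ∪ {x_1, …, x_k, y_1, …, y_k, z} induces an acyclic subgraph of H on 3k + 1 vertices; consequently, H has a feedback vertex set of size n − k. -/

import Mathlib

open SimpleGraph Walk in
/-- Forest criterion: if there is a rank function such that adjacent vertices have different
ranks and every vertex has at most one neighbor of smaller rank, the graph is acyclic. -/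
lemma forest_crit {α : Type*} {Γ : SimpleGraph α} (f : α → ℕ)
    (hne : ∀ ⦃u v⦄, Γ.Adj u v → f u ≠ f v)
    (huniq : ∀ ⦃u v w⦄, Γ.Adj u v → Γ.Adj u w → f v < f u → f w < f u → v = w) :
    Γ.IsAcyclic := by
  classical
  intro a c hc
  obtain ⟨u, hu, hmax⟩ := c.support.toFinset.exists_max_image f
    ⟨a, List.mem_toFinset.2 c.start_mem_support⟩
  rw [List.mem_toFinset] at hu
  have hrot := Walk.support_rotate c u hu
  set c' := c.rotate u hu with hc'def
  have hc' : c'.IsCycle := hc.rotate hu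
  have hmax' : ∀ w ∈ c'.support, f w ≤ f u := by
    intro w hw
    rw [Walk.support_eq_cons] at hw
    rcases List.mem_cons.mp hw with rfl | hw
    · exact le_refl _
    · exact hmax w (List.mem_toFinset.2
        (List.mem_of_mem_tail (hrot.mem_iff.mp hw)))
  have h3 := hc'.three_le_length
  have hnn : ¬ c'.Nil := by rw [Walk.not_nil_iff_lt_length]; omega
  have hcons := Walk.cons_tail_eq c' hnn
  set b := c'.getVert 1 with hbdef
  have hadj1 : Γ.Adj u b := Walk.adj_snd hnn
  set q := c'.tail with hqdef
  have hcyc2 : (Walk.cons hadj1 q).IsCycle := by rw [hcons]; exact hc'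
  obtain ⟨hpath, hedge⟩ := (Walk.cons_isCycle_iff _ _).mp hcyc2
  have hql : q.length + 1 = c'.length := by
    have := congrArg Walk.length hcons
    simpa using this
  set p := q.reverse with hpdef
  have hnp : ¬ p.Nil := by
    rw [Walk.not_nil_iff_lt_length, hpdef, Walk.length_reverse]; omega
  set d := p.getVert 1 with hddef
  have hadj2 : Γ.Adj u d := Walk.adj_snd hnp
  have hconsp := Walk.cons_tail_eq p hnp
  have hd1 : d ∈ p.support := by
    have hmem : d ∈ (Walk.cons (Walk.adj_snd hnp) p.tail).support := by
      exact List.mem_cons_of_mem _ p.tail.start_mem_support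
    rwa [hconsp] at hmem
  have hdq : d ∈ q.support := by
    rw [hpdef, Walk.support_reverse, List.mem_reverse] at hd1
    exact hd1
  have hsup : u :: q.support = c'.support := by
    have := congrArg Walk.support hcons
    simpa [Walk.support_cons] using this
  have hb : b ∈ c'.support := by
    rw [← hsup]; exact List.mem_cons_of_mem _ q.start_mem_support
  have hd : d ∈ c'.support := by
    rw [← hsup]; exact List.mem_cons_of_mem _ hdq
  have hfb : f b < f u := lt_of_le_of_ne (hmax' b hb) (fun h => hne hadj1 h.symm)
  have hfd : f d < f u := lt_of_le_of_ne (hmax' d hd) (fun h => hne hadj2 h.symm)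
  have hbd : b = d := huniq hadj1 hadj2 hfb hfd
  have he1 : s(u, d) ∈ (Walk.cons (Walk.adj_snd hnp) p.tail).edges := by
    exact List.Mem.head _
  rw [hconsp] at he1
  have he2 : s(u, d) ∈ q.edges := by
    rw [hpdef, Walk.edges_reverse, List.mem_reverse] at he1
    exact he1
  rw [← hbd] at he2
  exact hedge he2

/-- Rank function: `z` has rank 0, original vertices rank 1, the `x_i`/`y_i` rank 2. -/
def rankH {V : Type*} {k : ℕ} : (V ⊕ ((Fin k × Bool) ⊕ Unit)) → ℕ :=
  Sum.elim (fun _ => 1) (Sum.elim (fun _ => 2) (fun _ => 0))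


/-- The graph `H` built from `G` with vertex partition `P : Fin k → Set V`: each part `P i` is
turned into a clique, two new vertices `x_i = Sum.inr (Sum.inl (i, false))` and
`y_i = Sum.inr (Sum.inl (i, true))` are each adjacent exactly to the vertices of `P i`, and a
new vertex `z = Sum.inr (Sum.inr ())` is adjacent exactly to all vertices of `G`. -/
def Hgraph {V : Type*} (G : SimpleGraph V) {k : ℕ} (P : Fin k → Set V) :
    SimpleGraph (V ⊕ ((Fin k × Bool) ⊕ Unit)) :=
  SimpleGraph.fromRel fun a b =>
    match a, b with
    | Sum.inl u, Sum.inl v => G.Adj u v ∨ ∃ i, u ∈ P i ∧ v ∈ P i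
    | Sum.inl u, Sum.inr (Sum.inl (i, _)) => u ∈ P i
    | Sum.inl _, Sum.inr (Sum.inr _) => True
    | _, _ => False

/-- The vertex set `I ∪ {x_1, …, x_k, y_1, …, y_k, z}` of `H`. -/
def Fset {V : Type*} (k : ℕ) (I : Set V) : Set (V ⊕ ((Fin k × Bool) ⊕ Unit)) :=
  Sum.inl '' I ∪ Sum.inr '' Set.univ

/-- If `I` is an independent set of `G` containing exactly one vertex from
each part `P i` of a partition `(P 1, …, P k)` of `V(G)`, then `I ∪ {x_1, …, x_k, y_1, …, y_k, z}`
induces an acyclic subgraph of `H` on `3k + 1` vertices; consequently, `H` has a feedback vertex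
set of size `n − k`, where `n = |V(G)|`. -/
theorem stmt10 {V : Type*} [Fintype V] (G : SimpleGraph V) {k : ℕ} (P : Fin k → Set V)
    (hcov : (⋃ i, P i) = Set.univ)
    (hdisj : ∀ i j, i ≠ j → Disjoint (P i) (P j))
    (I : Set V) (hI : I.Pairwise fun u v => ¬ G.Adj u v)
    (hone : ∀ i, ∃! v, v ∈ I ∧ v ∈ P i) :
    ((Hgraph G P).induce (Fset k I)).IsAcyclic ∧ (Fset k I).ncard = 3 * k + 1 ∧
      ∃ X : Set (V ⊕ ((Fin k × Bool) ⊕ Unit)),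
        X.ncard = Fintype.card V - k ∧ ((Hgraph G P).induce Xᶜ).IsAcyclic := by
  classical
  choose g hgI hgP using fun i => (hone i).exists
  have hginj : Function.Injective g := by
    intro i j hij
    by_contra hne
    exact Set.disjoint_left.mp (hdisj i j hne) (hgP i) (by rw [hij]; exact hgP j)
  have hIrange : I = Set.range g := by
    ext v
    constructor
    · intro hv
      have hv2 : v ∈ ⋃ i, P i := hcov ▸ Set.mem_univ v
      obtain ⟨i, hi⟩ := Set.mem_iUnion.mp hv2
      exact ⟨i, (hone i).unique ⟨hgI i, hgP i⟩ ⟨hv, hi⟩⟩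
    · rintro ⟨i, rfl⟩; exact hgI i
  have hIcard : I.ncard = k := by
    rw [hIrange, ← Set.image_univ, Set.ncard_image_of_injective _ hginj, Set.ncard_univ]
    simp
  have hkn : k ≤ Fintype.card V := by
    simpa using Fintype.card_le_of_injective g hginj
  have hmemI : ∀ u : V, Sum.inl u ∈ Fset k I → u ∈ I := by
    intro u hu
    simpa [Fset] using hu
  have hacyc : ((Hgraph G P).induce (Fset k I)).IsAcyclic := by
    apply forest_crit (fun w => rankH w.1)
    · rintro ⟨a, ha⟩ ⟨b, hb⟩ hadj
      simp only [SimpleGraph.comap_adj, Function.Embedding.coe_subtype] at hadj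
      rcases a with u | ⟨⟨i, bi⟩⟩ | ⟨⟩ <;> rcases b with v | ⟨⟨j, bj⟩⟩ | ⟨⟩ <;>
          simp only [Hgraph, SimpleGraph.fromRel_adj] at hadj <;>
          simp [rankH]
      · -- inl u, inl v
        have huv : u ≠ v := fun h => hadj.1 (by rw [h])
        have hu' := hmemI u ha
        have hv' := hmemI v hb
        rcases hadj.2 with (h | ⟨i, h1, h2⟩) | (h | ⟨i, h1, h2⟩)
        · exact hI hu' hv' huv h
        · exact huv ((hone i).unique ⟨hu', h1⟩ ⟨hv', h2⟩)
        · exact hI hv' hu' (Ne.symm huv) h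
        · exact huv ((hone i).unique ⟨hu', h2⟩ ⟨hv', h1⟩)
      · exact hadj.2.elim id id
      · exact hadj.2.elim id id
    · rintro ⟨a, ha⟩ ⟨b, hb⟩ ⟨c, hc⟩ h1 h2 hfb hfc
      simp only [SimpleGraph.comap_adj, Function.Embedding.coe_subtype] at h1 h2
      apply Subtype.ext
      simp only at hfb hfc
      rcases a with u | ⟨⟨i, bi⟩⟩ | ⟨⟩
      · -- rank 1 : both lower neighbors are z
        rcases b with v | ⟨⟨j, bj⟩⟩ | ⟨⟩ <;> simp [rankH] at hfb
        rcases c with w | ⟨⟨j, bj⟩⟩ | ⟨⟩ <;> simp [rankH] at hfc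
        rfl
      · -- rank 2 : both lower neighbors are the unique I-vertex in P i
        rcases b with v | ⟨⟨j, bj⟩⟩ | ⟨⟩
        · rcases c with w | ⟨⟨j, bj⟩⟩ | ⟨⟩
          · simp only [Hgraph, SimpleGraph.fromRel_adj] at h1 h2
            have hv : v ∈ P i := by
              rcases h1.2 with h | h
              · exact h.elim
              · exact h
            have hw : w ∈ P i := by
              rcases h2.2 with h | h
              · exact h.elim
              · exact h
            have hvw : v = w := (hone i).unique ⟨hmemI v hb, hv⟩ ⟨hmemI w hc, hw⟩
            subst hvw
            rfl
          · simp [rankH] at hfc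
          · simp only [Hgraph, SimpleGraph.fromRel_adj] at h2
            simp at h2
        · simp [rankH] at hfb
        · simp only [Hgraph, SimpleGraph.fromRel_adj] at h1
          simp at h1
      · -- rank 0 : no lower neighbors
        simp [rankH] at hfb
  have hdisj2 : Disjoint (Sum.inl '' I : Set (V ⊕ ((Fin k × Bool) ⊕ Unit)))
      (Sum.inr '' Set.univ) := by
    rw [Set.disjoint_left]
    rintro x ⟨v, _, rfl⟩ ⟨w, _, h⟩
    exact Sum.inl_ne_inr h.symm
  have hcard : (Fset k I).ncard = 3 * k + 1 := by
    rw [Fset, Set.ncard_union_eq hdisj2 (Set.toFinite _) (Set.toFinite _),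
      Set.ncard_image_of_injective _ Sum.inl_injective,
      Set.ncard_image_of_injective _ Sum.inr_injective, hIcard, Set.ncard_univ,
      Nat.card_eq_fintype_card]
    simp [Fintype.card_sum, Fintype.card_prod]
    ring
  refine ⟨hacyc, hcard, (Fset k I)ᶜ, ?_, by rwa [compl_compl]⟩
  have htot := Set.ncard_add_ncard_compl (Fset k I)
  have hT : Nat.card (V ⊕ ((Fin k × Bool) ⊕ Unit)) = Fintype.card V + (2 * k + 1) := by
    rw [Nat.card_eq_fintype_card]
    simp [Fintype.card_sum, Fintype.card_prod]
    ring
  rw [hcard, hT] at htot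
  omega
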